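/- With the Hill Lemma setup (filtration (X_α | α≤σ) of X, chosen <κ-generated subobjects A_α ⊆ X with X_{α+1} = X_α + A_α, ℓ(S) = Σ_{α∈S} A_α, and S ⊆ σ called closed if every α ∈ S satisfies X_α ∩ A_α ⊆ Σ_{γ∈S, γ<α} A_γ): if S ⊆ σ is closed, then ℓ(S) ∩ X_α = ℓ(S ∩ α) for each α < σ. -/

import Mathlib

open CategoryTheory CategoryTheory.Limits ZeroObject

universe v u

namespace Paper

section Defs

variable {C : Type u} [Category.{v} C]

/-- A preorder `J` is `κ`-directed if every subset of cardinality `< κ`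
has an upper bound in `J`. -/
def IsKappaDirected (κ : Cardinal.{v}) (J : Type v) [Preorder J] : Prop :=
  ∀ s : Set J, Cardinal.mk s < κ → ∃ j : J, ∀ i ∈ s, i ≤ j

/-- An object `X` is `< κ`-presentable if `Hom(X, -)` preserves `κ`-directed colimits. -/
def KPresentable (κ : Cardinal.{v}) (X : C) : Prop :=
  ∀ (J : Type v) [Preorder J], IsKappaDirected κ J →
    ∀ D : J ⥤ C, PreservesColimit D (coyoneda.obj (Opposite.op X))

/-- An object `X` is `< κ`-generated if `Hom(X, -)` preserves `κ`-directed colimits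
of systems of monomorphisms. -/
def KGenerated (κ : Cardinal.{v}) (X : C) : Prop :=
  ∀ (J : Type v) [Preorder J], IsKappaDirected κ J →
    ∀ D : J ⥤ C, (∀ (i j : J) (h : i ≤ j), Mono (D.map (homOfLE h))) →
      PreservesColimit D (coyoneda.obj (Opposite.op X))

variable (C)

/-- A generating set of objects: every object is an epimorphic image of a coproduct
of objects from `S`. -/
def IsGeneratingSet [HasColimits C] (S : Set C) : Prop :=
  ∀ X : C, ∃ (ι : Type v) (f : ι → C) (p : (∐ f) ⟶ X), (∀ i, f i ∈ S) ∧ Epi p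

/-- The category is locally `< κ`-presentable: it has a generating set consisting of
`< κ`-presentable objects. -/
def LocallyKPresentable [HasColimits C] (κ : Cardinal.{v}) : Prop :=
  ∃ S : Set C, Small.{v} S ∧ IsGeneratingSet C S ∧ ∀ X ∈ S, KPresentable κ X

variable {C}

/-- The quotient object `B/A` for subobjects `A ≤ B` of `X`. -/
noncomputable def subQuot [Abelian C] {X : C} (A B : Subobject X) (h : A ≤ B) : C :=
  cokernel (Subobject.ofLE A B h)

/-- A filtration of an object `X`: a well-ordered continuous chain of subobjects starting
at `0` and ending at `X`. (At limit ordinals `μ ≤ len`, the value is the direct union,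
i.e. the least upper bound, of the earlier values.) -/
structure Filtration [Abelian C] (X : C) where
  len : Ordinal.{v}
  toFun : Ordinal.{v} → Subobject X
  monotone : Monotone toFun
  map_zero : toFun 0 = ⊥
  map_len : toFun len = ⊤
  isLUB_of_isLimit : ∀ μ : Ordinal.{v}, Order.IsSuccLimit μ → μ ≤ len →
    IsLUB (toFun '' Set.Iio μ) (toFun μ)

/-- The consecutive quotient `X_{α+1}/X_α` of a filtration. -/
noncomputable def Filtration.quot [Abelian C] {X : C} (F : Filtration X)
    (α : Ordinal.{v}) : C :=
  subQuot (F.toFun α) (F.toFun (α + 1)) (F.monotone (le_self_add (a := α) (b := 1)))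

/-- The filtration is an `S`-filtration: all consecutive quotients lie in `S` (up to
isomorphism). -/
def Filtration.Fits [Abelian C] {X : C} (F : Filtration X) (S : Set C) : Prop :=
  ∀ α, α < F.len → ∃ s ∈ S, Nonempty (F.quot α ≅ s)

variable (C)

/-- The class of `S`-filtered objects. -/
def Filt [Abelian C] (S : Set C) : Set C := {X | ∃ F : Filtration X, F.Fits S}

/-- A class is deconstructible if it is `Filt S` for a *set* `S` of objects. -/
def Deconstructible [Abelian C] (F : Set C) : Prop :=
  ∃ S : Set C, Small.{v} S ∧ F = Filt C S

variable {C}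

/-- `Ext¹(A, B) = 0`, expressed by the splitting of all short exact sequences
`0 → B → E → A → 0`. -/
def ext1Zero [Abelian C] (A B : C) : Prop :=
  ∀ (E : C) (i : B ⟶ E) (p : E ⟶ A) (w : i ≫ p = 0),
    (ShortComplex.mk i p w).ShortExact → ∃ r : E ⟶ B, i ≫ r = 𝟙 B

/-- `κ`-Kaplansky class. -/
def IsKaplansky [Abelian C] (κ : Cardinal.{v}) (F : Set C) : Prop :=
  ∀ Fo ∈ F, ∀ X : Subobject Fo, KGenerated κ (X : C) →
    ∃ Y : Subobject Fo, X ≤ Y ∧ KPresentable κ (Y : C) ∧ (Y : C) ∈ F ∧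
      cokernel Y.arrow ∈ F

end Defs





section Statements

variable {C : Type u} [Category.{v} C]

variable [Abelian C] [HasColimits C] [HasLimits C] [WellPowered.{v} C] [AB5 C] [HasSeparator C]

noncomputable instance instCompleteLatticeSubobjectV (X : C) : CompleteLattice (Subobject X) :=
  Subobject.instCompleteLattice.{v}

end Statements

section HillAux

variable {C : Type u} [Category.{v} C] [Abelian C]

lemma hill_factors_iff_zero {X T : C} (P : Subobject X) (f : T ⟶ X) :
    P.Factors f ↔ f ≫ cokernel.π P.arrow = 0 := by
  constructor
  · intro h
    rw [← P.factorThru_arrow f h, Category.assoc, cokernel.condition, comp_zero]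
  · intro h
    exact (Subobject.factors_iff _ _).mpr ⟨Abelian.monoLift P.arrow f h,
      Abelian.monoLift_comp P.arrow f h⟩

lemma hill_arrow_zero_of_le {X : C} {P Q : Subobject X} (h : P ≤ Q) :
    P.arrow ≫ cokernel.π Q.arrow = 0 :=
  (hill_factors_iff_zero Q P.arrow).mp ((Subobject.factors_iff _ _).mpr
    ⟨Subobject.ofLE _ _ h, Subobject.ofLE_arrow h⟩)

lemma hill_le_of_arrow_zero {X : C} {P Q : Subobject X}
    (h : P.arrow ≫ cokernel.π Q.arrow = 0) : P ≤ Q := by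
  have hf := (hill_factors_iff_zero Q P.arrow).mpr h
  exact Subobject.le_of_comm (Q.factorThru P.arrow hf) (Q.factorThru_arrow _ _)

lemma hill_sup_epi {X : C} (W Z : Subobject X) :
    ∃ e : ((W : C) ⊞ (Z : C)) ⟶ ((W ⊔ Z : Subobject X) : C),
      Epi e ∧ e ≫ (W ⊔ Z).arrow = biprod.desc W.arrow Z.arrow := by
  set d : ((W : C) ⊞ (Z : C)) ⟶ X := biprod.desc W.arrow Z.arrow with hd
  have hdsup : d ≫ cokernel.π (W ⊔ Z).arrow = 0 := by
    apply biprod.hom_ext' <;> simp [hd, hill_arrow_zero_of_le (le_sup_left : W ≤ W ⊔ Z),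
      hill_arrow_zero_of_le (le_sup_right : Z ≤ W ⊔ Z)]
  set ι : Abelian.image d ⟶ X := Abelian.image.ι d with hι
  -- mk ι ≤ W ⊔ Z
  have h1 : Subobject.mk ι ≤ W ⊔ Z := by
    apply hill_le_of_arrow_zero
    have : ι ≫ cokernel.π (W ⊔ Z).arrow = 0 := by
      have := cokernel.π_desc d (cokernel.π (W ⊔ Z).arrow) hdsup
      rw [← this, ← Category.assoc, kernel.condition, zero_comp]
    rw [← Subobject.underlyingIso_arrow ι, Category.assoc] at this
    rw [← cancel_epi (Subobject.underlyingIso ι).inv, comp_zero, this]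
  have h2 : W ⊔ Z ≤ Subobject.mk ι := by
    apply sup_le
    · exact Subobject.le_mk_of_comm
        (kernel.lift (cokernel.π d) W.arrow (by
          have : W.arrow = biprod.inl ≫ d := by simp [hd]
          rw [this, Category.assoc, cokernel.condition, comp_zero]))
        (kernel.lift_ι _ _ _)
    · exact Subobject.le_mk_of_comm
        (kernel.lift (cokernel.π d) Z.arrow (by
          have : Z.arrow = biprod.inr ≫ d := by simp [hd]
          rw [this, Category.assoc, cokernel.condition, comp_zero]))
        (kernel.lift_ι _ _ _)
  -- maps back and forth
  set g₁ : Abelian.image d ⟶ ((W ⊔ Z : Subobject X) : C) :=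
    Subobject.ofMkLE ι (W ⊔ Z) h1 with hg₁
  have hg₁ι : g₁ ≫ (W ⊔ Z).arrow = ι := Subobject.ofMkLE_arrow h1
  set g₂ : ((W ⊔ Z : Subobject X) : C) ⟶ Abelian.image d :=
    Subobject.ofLEMk (W ⊔ Z) ι h2 with hg₂
  have hg₂ι : g₂ ≫ ι = (W ⊔ Z).arrow := Subobject.ofLEMk_comp h2
  have hiso : IsIso g₁ := by
    refine ⟨g₂, ?_, ?_⟩
    · rw [← cancel_mono ι]; simp [Category.assoc, hg₁ι, hg₂ι]
    · rw [← cancel_mono (W ⊔ Z).arrow]; simp [Category.assoc, hg₁ι, hg₂ι]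
  refine ⟨Abelian.factorThruImage d ≫ g₁, ?_, ?_⟩
  · haveI := hiso
    infer_instance
  · rw [Category.assoc, hg₁ι, Abelian.image.fac]

lemma hill_modular {X : C} (W Z Y : Subobject X) (hWY : W ≤ Y) :
    (W ⊔ Z) ⊓ Y ≤ W ⊔ (Z ⊓ Y) := by
  set R := W ⊔ (Z ⊓ Y) with hR
  obtain ⟨e, he, hed⟩ := hill_sup_epi W Z
  set N := (W ⊔ Z) ⊓ Y with hN
  apply hill_le_of_arrow_zero
  set j : (N : C) ⟶ ((W ⊔ Z : Subobject X) : C) :=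
    Subobject.ofLE _ _ (inf_le_left : N ≤ W ⊔ Z) with hj
  have hjarrow : j ≫ (W ⊔ Z).arrow = N.arrow := Subobject.ofLE_arrow _
  -- pull back the epi e along j
  haveI : Epi (pullback.fst j e) := inferInstance
  rw [← cancel_epi (pullback.fst j e), comp_zero, ← Category.assoc,
    ← hjarrow, ← Category.assoc, pullback.condition]
  -- now the goal is ((pullback.snd j e ≫ e) ≫ (W ⊔ Z).arrow) ≫ cokernel.π R.arrow = 0
  simp only [Category.assoc]
  rw [reassoc_of% hed]
  have hdesc : biprod.desc W.arrow Z.arrow ≫ cokernel.π R.arrow =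
      biprod.snd ≫ Z.arrow ≫ cokernel.π R.arrow := by
    apply biprod.hom_ext' <;>
      simp [hill_arrow_zero_of_le (le_sup_left : W ≤ R)] <;> exact hill_arrow_zero_of_le le_sup_left
  rw [hdesc]
  -- let c be the composite into X through Z
  set c : (pullback j e : C) ⟶ X := pullback.snd j e ≫ biprod.snd ≫ Z.arrow with hc
  have hcZ : Z.Factors c := (Subobject.factors_iff _ _).mpr
    ⟨pullback.snd j e ≫ biprod.snd, by simp [hc]⟩
  have hcY : Y.Factors c := by
    have h1 : biprod.snd ≫ Z.arrow ≫ cokernel.π Y.arrow =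
        biprod.desc W.arrow Z.arrow ≫ cokernel.π Y.arrow := by
      apply biprod.hom_ext' <;> simp [hill_arrow_zero_of_le hWY]
    rw [hill_factors_iff_zero, hc]
    simp only [Category.assoc]
    rw [h1, ← hed]
    simp only [Category.assoc]
    have hpc : pullback.fst j e ≫ j = pullback.snd j e ≫ e := pullback.condition
    rw [← reassoc_of% hpc, reassoc_of% hjarrow,
      hill_arrow_zero_of_le (inf_le_right : N ≤ Y), comp_zero]
  have hcZY : (Z ⊓ Y).Factors c := (Subobject.inf_factors c).mpr ⟨hcZ, hcY⟩
  have hZYR : (Z ⊓ Y) ≤ R := le_sup_right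
  have : c ≫ cokernel.π R.arrow = 0 := by
    rw [← (Z ⊓ Y).factorThru_arrow c hcZY, Category.assoc,
      ← Subobject.ofLE_arrow hZYR, Category.assoc, cokernel.condition, comp_zero, comp_zero]
  rw [hc] at this
  simp only [Category.assoc] at this ⊢
  exact this

lemma hill_colimit_const {ι : Type v} [Preorder ι] [Nonempty ι] [IsDirected ι (· ≤ ·)]
    [HasColimits C] (W : C) :
    ∃ γ : colimit ((Functor.const ι).obj W) ≅ W,
      ∀ i, colimit.ι ((Functor.const ι).obj W) i ≫ γ.hom = 𝟙 W := by
  have key : ∀ (s : Cocone ((Functor.const ι).obj W)) (i j : ι), s.ι.app i = s.ι.app j := by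
    intro s i j
    obtain ⟨k, hik, hjk⟩ := directed_of (· ≤ ·) i j
    have h1 := s.ι.naturality (homOfLE hik)
    have h2 := s.ι.naturality (homOfLE hjk)
    simp only [Functor.const_obj_obj, Functor.const_obj_map, Category.id_comp,
      Category.comp_id] at h1 h2
    rw [← h1, ← h2]
  let i₀ : ι := Classical.arbitrary ι
  let cc : Cocone ((Functor.const ι).obj W) :=
    { pt := W
      ι := { app := fun _ => 𝟙 W, naturality := by intros; simp } }
  have hcc : IsColimit cc :=
    { desc := fun s => s.ι.app i₀
      fac := fun s i => by
        show 𝟙 W ≫ s.ι.app i₀ = s.ι.app i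
        exact (Category.id_comp _).trans (key s i₀ i)
      uniq := fun s m w => by
        have := w i₀
        simpa [cc] using this }
  refine ⟨colimit.isoColimitCocone ⟨cc, hcc⟩, fun i => ?_⟩
  simp [cc]

lemma hill_inf_le_ker {X M : C} (Y : Subobject X) (m : M ⟶ X) [Mono m] :
    Subobject.mk m ⊓ Y ≤ Subobject.mk (kernel.ι (m ≫ cokernel.π Y.arrow) ≫ m) := by
  set V := Subobject.mk m ⊓ Y with hV
  have h1 : V ≤ Subobject.mk m := inf_le_left
  have hg : Subobject.ofLEMk V m h1 ≫ m = V.arrow := Subobject.ofLEMk_comp h1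
  have h2 : V.arrow ≫ cokernel.π Y.arrow = 0 :=
    hill_arrow_zero_of_le (inf_le_right : V ≤ Y)
  have h3 : Subobject.ofLEMk V m h1 ≫ (m ≫ cokernel.π Y.arrow) = 0 := by
    rw [← Category.assoc, hg, h2]
  exact Subobject.le_mk_of_comm (kernel.lift _ _ h3)
    (by rw [← Category.assoc, kernel.lift_ι, hg])

noncomputable def hillCompleteLatticeSubobjectV [HasColimits C] [HasLimits C] [WellPowered.{v} C] (X : C) :
    CompleteLattice (Subobject X) :=
  Subobject.instCompleteLattice.{v}

noncomputable def hillCSSupSubobjectV [HasColimits C] [HasLimits C] [WellPowered.{v} C]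
    (X : C) : CompleteSemilatticeSup (Subobject X) :=
  (hillCompleteLatticeSubobjectV X).toCompleteSemilatticeSup

noncomputable def hillCSInfSubobjectV [HasColimits C] [HasLimits C] [WellPowered.{v} C]
    (X : C) : CompleteSemilatticeInf (Subobject X) :=
  (hillCompleteLatticeSubobjectV X).toCompleteSemilatticeInf

attribute [local instance] hillCompleteLatticeSubobjectV hillCSSupSubobjectV hillCSInfSubobjectV

lemma hill_iSup_inf_le [HasColimits C] [HasLimits C] [WellPowered.{v} C] [AB5 C]
    {ι : Type v} [Preorder ι] [Nonempty ι] [IsDirected ι (· ≤ ·)]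
    {X : C} (F : ι → Subobject X) (hF : Monotone F) (Y : Subobject X) :
    (⨆ i, F i) ⊓ Y ≤ ⨆ i, (F i ⊓ Y) := by
  -- the directed diagram of subobjects
  let D : ι ⥤ C :=
    { obj := fun i => ((F i : Subobject X) : C)
      map := fun {i j} h => Subobject.ofLE _ _ (hF (leOfHom h))
      map_id := fun i => by
        rw [← cancel_mono (F i).arrow, Subobject.ofLE_arrow, Category.id_comp]
      map_comp := fun {i j k} f g => by
        rw [← cancel_mono (F k).arrow, Subobject.ofLE_arrow, Category.assoc,
          Subobject.ofLE_arrow, Subobject.ofLE_arrow] }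
  let ν : D ⟶ (Functor.const ι).obj X :=
    { app := fun i => (F i).arrow
      naturality := fun i j f => by
        simp only [D, Functor.const_obj_obj, Functor.const_obj_map, Category.comp_id]
        exact Subobject.ofLE_arrow _ }
  let t : colimit D ⟶ X := colimit.desc D ⟨X, ν⟩
  have hti : ∀ i, colimit.ι D i ≫ t = (F i).arrow := fun i => colimit.ι_desc _ i
  -- t is a monomorphism by AB5
  haveI : PreservesFiniteLimits (colim (J := ι) (C := C)) := inferInstance
  haveI : Mono ν := NatTrans.mono_of_mono_app ν
  obtain ⟨γX, hγX⟩ := hill_colimit_const (ι := ι) (C := C) X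
  have ht : t = colim.map ν ≫ γX.hom := by
    apply colimit.hom_ext
    intro j
    rw [hti j, ← Category.assoc, colimit.ι_map, Category.assoc, hγX]
    simp [ν]
  haveI : Mono t := by rw [ht]; exact mono_comp _ _
  -- sSup ≤ mk t
  have hsup_le : (⨆ i, F i) ≤ Subobject.mk t := by
    apply iSup_le
    intro i
    exact Subobject.le_mk_of_comm (colimit.ι D i) (hti i)
  -- kernel setup
  set π : X ⟶ cokernel Y.arrow := cokernel.π Y.arrow with hπ
  let μ : D ⟶ (Functor.const ι).obj (cokernel Y.arrow) :=
    { app := fun i => (F i).arrow ≫ π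
      naturality := fun i j f => by
        simp only [D, Functor.const_obj_obj, Functor.const_obj_map, Category.comp_id]
        rw [← Category.assoc]
        congr 1
        exact Subobject.ofLE_arrow _ }
  obtain ⟨γW, hγW⟩ := hill_colimit_const (ι := ι) (C := C) (cokernel Y.arrow)
  have hμt : t ≫ π = colim.map μ ≫ γW.hom := by
    apply colimit.hom_ext
    intro j
    rw [← Category.assoc, hti j, ← Category.assoc, colimit.ι_map, Category.assoc, hγW]
    simp [μ]
  -- the comparison iso for kernels
  let κ := kernelComparison μ (colim (J := ι) (C := C))
  haveI : IsIso κ := inferInstance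
  have hκι : κ ≫ kernel.ι (colim.map μ) = colim.map (kernel.ι μ) :=
    kernelComparison_comp_ι _ _
  -- the target
  set T : Subobject X := ⨆ i, (F i ⊓ Y) with hT
  -- main inequality chain
  refine le_trans (inf_le_inf_right Y hsup_le) (le_trans (hill_inf_le_ker Y t) ?_)
  rw [hμt]
  -- iso θ : colim (kernel μ) ≅ kernel (colim.map μ ≫ γW.hom)
  let θ : (colim (J := ι) (C := C)).obj (kernel μ) ≅ kernel (colim.map μ ≫ γW.hom) :=
    asIso κ ≪≫ (kernelCompMono (colim.map μ) γW.hom).symm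
  have hθ : θ.hom ≫ kernel.ι (colim.map μ ≫ γW.hom) = colim.map (kernel.ι μ) := by
    simp only [θ, Iso.trans_hom, asIso_hom, Iso.symm_hom, Category.assoc]
    rw [kernelCompMono_inv, kernel.lift_ι, hκι]
  -- cocone into T
  have hξ : ∀ i, T.Factors ((kernel.ι μ).app i ≫ (F i).arrow) := by
    intro i
    have hl : (F i).Factors ((kernel.ι μ).app i ≫ (F i).arrow) :=
      (Subobject.factors_iff _ _).mpr ⟨(kernel.ι μ).app i, rfl⟩
    have hz : ((kernel.ι μ).app i ≫ (F i).arrow) ≫ π = 0 := by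
      rw [Category.assoc]
      show (kernel.ι μ).app i ≫ μ.app i = 0
      rw [← NatTrans.comp_app, kernel.condition, zero_app]
    have hr : Y.Factors ((kernel.ι μ).app i ≫ (F i).arrow) :=
      (hill_factors_iff_zero _ _).mpr hz
    exact Subobject.factors_of_le _ (le_iSup (fun i => F i ⊓ Y) i)
      ((Subobject.inf_factors _).mpr ⟨hl, hr⟩)
  let cT : Cocone (kernel μ) :=
    { pt := (T : C)
      ι :=
        { app := fun i => T.factorThru _ (hξ i)
          naturality := fun i j f => by
            rw [← cancel_mono T.arrow]
            simp only [Functor.const_obj_obj, Functor.const_obj_map, Category.assoc,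
              Subobject.factorThru_arrow, Category.comp_id]
            have hnat := (kernel.ι μ).naturality f
            rw [← Category.assoc, hnat, Category.assoc]
            congr 1
            exact Subobject.ofLE_arrow _ } }
  let d : (colim (J := ι) (C := C)).obj (kernel μ) ⟶ (T : C) := colimit.desc (kernel μ) cT
  have hd : d ≫ T.arrow = colim.map (kernel.ι μ) ≫ t := by
    apply colimit.hom_ext
    intro j
    rw [← Category.assoc, colimit.ι_desc, ← Category.assoc, colimit.ι_map, Category.assoc,
      hti j]
    exact T.factorThru_arrow _ (hξ j)
  exact Subobject.mk_le_of_comm (θ.inv ≫ d) (by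
    rw [Category.assoc, hd, ← hθ]
    simp [Category.assoc])

lemma hill_sSup_inf_le [HasColimits C] [HasLimits C] [WellPowered.{v} C] [AB5 C] {X : C}
    (s : Set (Subobject X)) (hne : s.Nonempty) (hdir : DirectedOn (· ≤ ·) s)
    (Y : Subobject X) :
    sSup s ⊓ Y ≤ ⨆ a ∈ s, a ⊓ Y := by
  haveI : Small.{v} ↥s := small_of_injective Subtype.val_injective
  letI : Preorder (Shrink ↥s) :=
    Preorder.lift (fun j => (((equivShrink ↥s).symm j : ↥s) : Subobject X))
  haveI : Nonempty (Shrink ↥s) := ⟨equivShrink _ ⟨hne.some, hne.some_mem⟩⟩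
  haveI : IsDirected (Shrink ↥s) (· ≤ ·) := by
    constructor
    intro a b
    obtain ⟨c, hc, hac, hbc⟩ := hdir _ ((equivShrink ↥s).symm a).2 _ ((equivShrink ↥s).symm b).2
    refine ⟨equivShrink ↥s ⟨c, hc⟩, ?_, ?_⟩
    · show (((equivShrink ↥s).symm a : ↥s) : Subobject X) ≤
        (((equivShrink ↥s).symm (equivShrink ↥s ⟨c, hc⟩) : ↥s) : Subobject X)
      rw [Equiv.symm_apply_apply]
      exact hac
    · show (((equivShrink ↥s).symm b : ↥s) : Subobject X) ≤
        (((equivShrink ↥s).symm (equivShrink ↥s ⟨c, hc⟩) : ↥s) : Subobject X)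
      rw [Equiv.symm_apply_apply]
      exact hbc
  set F : Shrink ↥s → Subobject X := fun j => (((equivShrink ↥s).symm j : ↥s) : Subobject X)
    with hFdef
  have hF : Monotone F := fun a b h => h
  have h1 : sSup s ≤ ⨆ j, F j := by
    apply sSup_le
    intro a ha
    have : a = F (equivShrink ↥s ⟨a, ha⟩) := by simp [hFdef]
    rw [this]
    exact le_iSup F _
  have h2 : (⨆ j, (F j ⊓ Y)) ≤ ⨆ a ∈ s, a ⊓ Y := by
    apply iSup_le
    intro j
    exact le_iSup₂_of_le (F j) ((equivShrink ↥s).symm j).2 le_rfl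
  exact le_trans (inf_le_inf_right Y h1) (le_trans (hill_iSup_inf_le F hF Y) h2)

/-- Upper continuity: to bound `(⨆ γ ∈ T, A γ) ⊓ Y` it suffices to bound the
finite subsuprema. -/

lemma hill_continuity [HasColimits C] [HasLimits C] [WellPowered.{v} C] [AB5 C] {X : C}
    {ιa : Type*} (A : ιa → Subobject X) (T : Set ιa) (Y B : Subobject X)
    (hB : ∀ G : Finset ιa, ↑G ⊆ T → (⨆ γ ∈ G, A γ) ⊓ Y ≤ B) :
    (⨆ γ ∈ T, A γ) ⊓ Y ≤ B := by
  classical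
  set s : Set (Subobject X) := {x | ∃ G : Finset ιa, ↑G ⊆ T ∧ x = ⨆ γ ∈ G, A γ} with hs
  have hne : s.Nonempty := ⟨⨆ γ ∈ (∅ : Finset ιa), A γ, ⟨∅, by simp, rfl⟩⟩
  have hdir : DirectedOn (· ≤ ·) s := by
    rintro x ⟨G, hG, rfl⟩ y ⟨H, hH, rfl⟩
    refine ⟨⨆ γ ∈ G ∪ H, A γ, ⟨G ∪ H, by
      intro γ hγ
      rcases Finset.mem_coe.mp hγ with hγ'
      rcases Finset.mem_union.mp hγ' with h | h
      · exact hG (Finset.mem_coe.mpr h)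
      · exact hH (Finset.mem_coe.mpr h), rfl⟩, ?_, ?_⟩
    · exact biSup_mono fun γ h => Finset.mem_union_left _ h
    · exact biSup_mono fun γ h => Finset.mem_union_right _ h
  have hsup : sSup s = ⨆ γ ∈ T, A γ := by
    apply le_antisymm
    · apply sSup_le
      rintro x ⟨G, hG, rfl⟩
      exact iSup₂_le fun γ hγ => le_iSup₂_of_le γ (hG hγ) le_rfl
    · apply iSup₂_le
      intro γ hγ
      have hmem : (⨆ x ∈ ({γ} : Finset ιa), A x) ∈ s := ⟨{γ}, by simp [hγ], rfl⟩
      have : A γ ≤ ⨆ x ∈ ({γ} : Finset ιa), A x := by simp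
      exact le_trans this (le_sSup hmem)
  rw [← hsup]
  refine le_trans (hill_sSup_inf_le s hne hdir Y) ?_
  apply iSup₂_le
  rintro x ⟨G, hG, rfl⟩
  exact hB G hG

lemma hill_finite_step [HasColimits C] [HasLimits C] [WellPowered.{v} C] [AB5 C]
    {X : C} {σ : Ordinal.{v}} (Xc : Ordinal.{v} → Subobject X)
    (A : ↥(Set.Iio σ) → Subobject X) (hmono : Monotone Xc)
    (hA : ∀ α : ↥(Set.Iio σ), Xc ((α : Ordinal.{v}) + 1) = Xc α ⊔ A α)
    (S : Set ↥(Set.Iio σ))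
    (hS : ∀ α ∈ S, Xc ↑α ⊓ A α ≤ ⨆ γ ∈ {γ ∈ S | (γ : Ordinal.{v}) < (α : Ordinal.{v})}, A γ)
    (δ : Ordinal.{v}) :
    ∀ F : Finset ↥(Set.Iio σ), ↑F ⊆ S →
      (∀ γ ∈ F, (γ : Ordinal.{v}) < δ) → ∀ β : Ordinal.{v},
      (⨆ γ ∈ F, A γ) ⊓ Xc β ≤ ⨆ γ ∈ {γ ∈ S | (γ : Ordinal.{v}) < β}, A γ := by
  induction δ using Ordinal.induction with
  | h δ IH =>
  intro F hFS hFδ β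
  classical
  rcases F.eq_empty_or_nonempty with rfl | hFne
  · exact le_trans inf_le_left (iSup₂_le fun γ h => by simp at h)
  obtain ⟨m, hmF, hmax⟩ := F.exists_max_image (fun γ => (γ : Ordinal.{v})) hFne
  by_cases hmβ : (m : Ordinal.{v}) < β
  · refine le_trans inf_le_left ?_
    apply iSup₂_le
    intro γ hγ
    exact le_iSup₂_of_le γ ⟨hFS hγ, lt_of_le_of_lt (hmax γ hγ) hmβ⟩ le_rfl
  · push_neg at hmβ
    set E := F.erase m with hE
    have hEle : ∀ γ ∈ E, A γ ≤ Xc (m : Ordinal.{v}) := by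
      intro γ hγ
      have hne : γ ≠ m := Finset.ne_of_mem_erase hγ
      have hγm : (γ : Ordinal.{v}) < (m : Ordinal.{v}) :=
        lt_of_le_of_ne (hmax γ (Finset.mem_of_mem_erase hγ))
          (fun hv => hne (Subtype.ext hv))
      have h1 : A γ ≤ Xc ((γ : Ordinal.{v}) + 1) := by
        rw [hA γ]; exact le_sup_right
      refine le_trans h1 (hmono ?_)
      rw [Ordinal.add_one_eq_succ]
      exact Order.succ_le_of_lt hγm
    have hEsub : (⨆ γ ∈ E, A γ) ≤ Xc (m : Ordinal.{v}) := by
      apply iSup₂_le; intro γ hγ; exact hEle γ hγ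
    have hFsplit : (⨆ γ ∈ F, A γ) = A m ⊔ ⨆ γ ∈ E, A γ := by
      conv_lhs => rw [← Finset.insert_erase hmF]
      exact Finset.iSup_insert m E (fun γ => A γ)
    have hXβm : Xc β ≤ Xc (m : Ordinal.{v}) := hmono hmβ
    calc (⨆ γ ∈ F, A γ) ⊓ Xc β
        = ((⨆ γ ∈ F, A γ) ⊓ Xc (m : Ordinal.{v})) ⊓ Xc β := by
          rw [inf_assoc, inf_eq_right.mpr hXβm]
      _ ≤ ((⨆ γ ∈ E, A γ) ⊔ (A m ⊓ Xc (m : Ordinal.{v}))) ⊓ Xc β := by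
          apply inf_le_inf_right
          rw [hFsplit, sup_comm]
          exact hill_modular _ _ _ hEsub
      _ ≤ ((⨆ γ ∈ E, A γ) ⊔
            (⨆ γ ∈ {γ ∈ S | (γ : Ordinal.{v}) < (m : Ordinal.{v})}, A γ)) ⊓ Xc β := by
          apply inf_le_inf_right
          apply sup_le_sup_left
          rw [inf_comm]
          exact hS m (hFS hmF)
      _ ≤ (⨆ γ ∈ {γ ∈ S | (γ : Ordinal.{v}) < (m : Ordinal.{v})}, A γ) ⊓ Xc β := by
          apply inf_le_inf_right
          apply sup_le _ le_rfl
          apply iSup₂_le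
          intro γ hγ
          have hne : γ ≠ m := Finset.ne_of_mem_erase hγ
          have hγm : (γ : Ordinal.{v}) < (m : Ordinal.{v}) :=
            lt_of_le_of_ne (hmax γ (Finset.mem_of_mem_erase hγ))
              (fun hv => hne (Subtype.ext hv))
          exact le_iSup₂_of_le γ ⟨hFS (Finset.mem_of_mem_erase hγ), hγm⟩ le_rfl
      _ ≤ ⨆ γ ∈ {γ ∈ S | (γ : Ordinal.{v}) < β}, A γ := by
          apply hill_continuity
          intro G hG
          refine IH (m : Ordinal.{v}) (hFδ m hmF) G ?_ ?_ β
          · exact fun γ hγ => (hG hγ).1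
          · exact fun γ hγ => (hG (Finset.mem_coe.mpr hγ)).2

end HillAux

section Statements

variable {C : Type u} [Category.{v} C]

variable [Abelian C] [HasColimits C] [HasLimits C] [WellPowered.{v} C] [AB5 C] [HasSeparator C]

/-- `ℓ(S) = Σ_{α ∈ S} A_α`. -/
noncomputable def hillEll {X : C} {σ : Ordinal.{v}} (A : ↥(Set.Iio σ) → Subobject X)
    (S : Set ↥(Set.Iio σ)) : Subobject X :=
  ⨆ α ∈ S, A α

/-- `S ⊆ σ` is closed: every `α ∈ S` satisfies `X_α ∩ A_α ⊆ Σ_{γ ∈ S, γ < α} A_γ`. -/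
def HillClosed {X : C} {σ : Ordinal.{v}} (Xc : Ordinal.{v} → Subobject X)
    (A : ↥(Set.Iio σ) → Subobject X) (S : Set ↥(Set.Iio σ)) : Prop :=
  ∀ α ∈ S, Xc α ⊓ A α ≤ ⨆ γ ∈ {γ ∈ S | (γ : Ordinal.{v}) < (α : Ordinal.{v})}, A γ

variable (κ : Cardinal.{v}) (X : C) (σ : Ordinal.{v})
  (Xc : Ordinal.{v} → Subobject X) (A : ↥(Set.Iio σ) → Subobject X)

theorem statement4 (hκ : κ.IsRegular)
    (hmono : Monotone Xc) (h0 : Xc 0 = ⊥) (htop : Xc σ = ⊤)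
    (hlim : ∀ μ : Ordinal.{v}, Order.IsSuccLimit μ → μ ≤ σ → Xc μ = ⨆ γ ∈ Set.Iio μ, Xc γ)
    (hA : ∀ α : ↥(Set.Iio σ), Xc ((α : Ordinal.{v}) + 1) = Xc α ⊔ A α)
    (hAgen : ∀ α, KGenerated κ ((A α : C)))
    (S : Set ↥(Set.Iio σ)) (hS : HillClosed Xc A S)
    (α : Ordinal.{v}) (hα : α < σ) :
    hillEll A S ⊓ Xc α = hillEll A {γ ∈ S | (γ : Ordinal.{v}) < α} := by
  simp only [hillEll]
  apply le_antisymm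
  · apply hill_continuity A S (Xc α)
    intro G hG
    exact hill_finite_step Xc A hmono hA S hS σ G hG (fun γ _ => γ.2) α
  · apply le_inf
    · exact biSup_mono fun γ h => h.1
    · apply iSup₂_le
      intro γ hγ
      have h1 : A γ ≤ Xc ((γ : Ordinal.{v}) + 1) := by
        rw [hA γ]; exact le_sup_right
      refine le_trans h1 (hmono ?_)
      rw [Ordinal.add_one_eq_succ]
      exact Order.succ_le_of_lt hγ.2

end Statements

end Paper
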